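/- For k matrices Z₁, ..., Z_k ∈ ℝ^{d×nᵢ} whose column spaces are pairwise orthogonal (ZᵢᵀZⱼ = 0 for i ≠ j), the nuclear norm of the full concatenation satisfies ‖[Z₁, ..., Z_k]‖_* = Σᵢ ‖Zᵢ‖_*. -/

import Mathlib

open Matrix

noncomputable def singularValues {d : ℕ} {n : Type*} [Fintype n]
    (M : Matrix (Fin d) n ℝ) : Fin d → ℝ :=
  fun i => Real.sqrt ((Matrix.isHermitian_mul_conjTranspose_self M).eigenvalues i)

noncomputable def nuclearNorm {d : ℕ} {n : Type*} [Fintype n]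
    (M : Matrix (Fin d) n ℝ) : ℝ :=
  ∑ i, singularValues M i

noncomputable def matSpectralNorm {d : ℕ} {n : Type*} [Fintype n]
    (M : Matrix (Fin d) n ℝ) : ℝ :=
  ⨆ i, singularValues M i

namespace Matrix.PosSemidef

noncomputable def sqrt {m : Type*} [Fintype m] [DecidableEq m]
    {A : Matrix m m ℝ} (hA : A.PosSemidef) : Matrix m m ℝ :=
  hA.1.eigenvectorUnitary * diagonal (Real.sqrt ∘ hA.1.eigenvalues) *
    (star hA.1.eigenvectorUnitary : Matrix m m ℝ)

open scoped MatrixOrder in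
lemma sqrt_eq_cfcSqrt {m : Type*} [Fintype m] [DecidableEq m]
    {A : Matrix m m ℝ} (hA : A.PosSemidef) : hA.sqrt = CFC.sqrt A := by
  rw [CFC.sqrt_eq_cfc, cfc_nnreal_eq_real _ A, hA.1.cfc_eq]
  simp only [IsHermitian.cfc, Unitary.conjStarAlgAut_apply, sqrt]
  congr 2
  ext i j
  simp [diagonal_apply, max_eq_left (hA.eigenvalues_nonneg _)]

open scoped MatrixOrder in
lemma posSemidef_sqrt {m : Type*} [Fintype m] [DecidableEq m]
    {A : Matrix m m ℝ} (hA : A.PosSemidef) : hA.sqrt.PosSemidef := by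
  rw [sqrt_eq_cfcSqrt]
  exact (CFC.sqrt_nonneg A).posSemidef

open scoped MatrixOrder in
lemma sqrt_mul_self {m : Type*} [Fintype m] [DecidableEq m]
    {A : Matrix m m ℝ} (hA : A.PosSemidef) : hA.sqrt * hA.sqrt = A := by
  rw [sqrt_eq_cfcSqrt]
  exact CFC.sqrt_mul_sqrt_self A hA.nonneg

open scoped MatrixOrder in
lemma eq_sqrt_of_sq_eq {m : Type*} [Fintype m] [DecidableEq m]
    {A B : Matrix m m ℝ} (hB : B.PosSemidef) (hA : A.PosSemidef) (h : B ^ 2 = A) :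
    B = hA.sqrt := by
  rw [sqrt_eq_cfcSqrt]
  exact (CFC.sqrt_unique (by rw [← sq]; exact h) hB.nonneg).symm

end Matrix.PosSemidef

lemma trace_sqrt_eq_sum {m : Type*} [Fintype m] [DecidableEq m]
    {A : Matrix m m ℝ} (hA : A.PosSemidef) :
    hA.sqrt.trace = ∑ i, Real.sqrt (hA.1.eigenvalues i) := by
  rw [Matrix.PosSemidef.sqrt, Matrix.trace_mul_cycle]
  have hU : (star hA.1.eigenvectorUnitary.1) * hA.1.eigenvectorUnitary.1 = 1 :=
    Matrix.UnitaryGroup.star_mul_self _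
  rw [hU, Matrix.one_mul, Matrix.trace_diagonal]
  simp [Function.comp]

lemma nuclearNorm_eq_trace_sqrt {d : ℕ} {n : Type*} [Fintype n]
    (M : Matrix (Fin d) n ℝ) :
    nuclearNorm M = (Matrix.posSemidef_self_mul_conjTranspose M).sqrt.trace := by
  rw [trace_sqrt_eq_sum]
  rfl

theorem nuclearNorm_concat_eq_sum_of_pairwise_orthogonal
    {d k : ℕ} (n : Fin k → ℕ)
    (Z : ∀ i : Fin k, Matrix (Fin d) (Fin (n i)) ℝ)
    (horth : ∀ i j, i ≠ j → (Z i)ᵀ * Z j = 0) :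
    nuclearNorm (Matrix.of fun r (p : Σ i : Fin k, Fin (n i)) => Z p.1 r p.2)
      = ∑ i, nuclearNorm (Z i) := by
  classical
  set W : Matrix (Fin d) (Σ i : Fin k, Fin (n i)) ℝ :=
    Matrix.of fun r (p : Σ i : Fin k, Fin (n i)) => Z p.1 r p.2 with hWdef
  have horth' : ∀ i j, i ≠ j → (Z i)ᴴ * Z j = 0 := by
    intro i j hij
    rw [Matrix.conjTranspose_eq_transpose_of_trivial]
    exact horth i j hij
  have hAi : ∀ i, (Z i * (Z i)ᴴ).PosSemidef := fun i =>
    Matrix.posSemidef_self_mul_conjTranspose _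
  set S : Fin k → Matrix (Fin d) (Fin d) ℝ := fun i => (hAi i).sqrt with hSdef
  have hSpsd : ∀ i, (S i).PosSemidef := fun i => (hAi i).posSemidef_sqrt
  have hSherm : ∀ i, (S i)ᴴ = S i := fun i => (hSpsd i).1
  have hSS : ∀ i, S i * S i = Z i * (Z i)ᴴ := fun i => (hAi i).sqrt_mul_self
  have hAij : ∀ i j, i ≠ j → (Z i * (Z i)ᴴ) * (Z j * (Z j)ᴴ) = 0 := by
    intro i j hij
    calc (Z i * (Z i)ᴴ) * (Z j * (Z j)ᴴ)
        = Z i * ((Z i)ᴴ * Z j) * (Z j)ᴴ := by simp only [Matrix.mul_assoc]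
      _ = 0 := by rw [horth' i j hij]; simp
  have hSA : ∀ i j, i ≠ j → S i * (Z j * (Z j)ᴴ) = 0 := by
    intro i j hij
    have h : (S i * (Z j * (Z j)ᴴ))ᴴ * (S i * (Z j * (Z j)ᴴ)) = 0 := by
      rw [Matrix.conjTranspose_mul, hSherm i, (hAi j).1]
      calc (Z j * (Z j)ᴴ) * S i * (S i * (Z j * (Z j)ᴴ))
          = (Z j * (Z j)ᴴ) * (S i * S i) * (Z j * (Z j)ᴴ) := by
            simp only [Matrix.mul_assoc]
        _ = 0 := by rw [hSS i, hAij j i (Ne.symm hij)]; simp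
    exact Matrix.conjTranspose_mul_self_eq_zero.mp h
  have hSij : ∀ i j, i ≠ j → S i * S j = 0 := by
    intro i j hij
    have h : (S i * S j) * (S i * S j)ᴴ = 0 := by
      rw [Matrix.conjTranspose_mul, hSherm i, hSherm j]
      calc S i * S j * (S j * S i) = S i * (S j * S j) * S i := by
            simp only [Matrix.mul_assoc]
        _ = 0 := by rw [hSS j, hSA i j hij]; simp
    exact Matrix.self_mul_conjTranspose_eq_zero.mp h
  have hWA : W * Wᴴ = ∑ i, Z i * (Z i)ᴴ := by
    ext r s
    simp only [Matrix.mul_apply, Matrix.sum_apply, Matrix.conjTranspose_apply,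
      star_trivial, hWdef, Matrix.of_apply]
    rw [← Finset.univ_sigma_univ, Finset.sum_sigma]
  have hsum_psd : (∑ i, S i).PosSemidef :=
    Finset.sum_induction S Matrix.PosSemidef (fun a b ha hb => ha.add hb)
      Matrix.PosSemidef.zero (fun i _ => hSpsd i)
  have hsq : (∑ i, S i) ^ 2 = W * Wᴴ := by
    rw [hWA, sq, Finset.sum_mul_sum]
    refine Finset.sum_congr rfl fun i _ => ?_
    rw [Finset.sum_eq_single i (fun j _ hji => hSij i j (Ne.symm hji))
      (by simp), hSS i]
  have hWpsd : (W * Wᴴ).PosSemidef := Matrix.posSemidef_self_mul_conjTranspose _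
  have hkey : (∑ i, S i) = hWpsd.sqrt := hsum_psd.eq_sqrt_of_sq_eq hWpsd hsq
  rw [nuclearNorm_eq_trace_sqrt]
  have h2 : (Matrix.posSemidef_self_mul_conjTranspose W).sqrt = ∑ i, S i := hkey.symm
  rw [h2, Matrix.trace_sum]
  refine Finset.sum_congr rfl fun i _ => ?_
  rw [nuclearNorm_eq_trace_sqrt]
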